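/- For the q-satiation U of a nonnegative additively separable valuation with distinct per-good net utilities at prices p > 0, the greedy demand set A satisfies the single improvement property negatively: no set B with |A \ B| ≤ 1 or |B \ A| ≤ 1 achieves strictly greater net utility than A. -/

import Mathlib

open Finset

variable {L : Type*} [Fintype L] [DecidableEq L]

/-- Hypotheses of the greedy demand construction: prices are strictly positive,
weights nonnegative, per-good net utilities `w l - p l` pairwise distinct, and
`A` consists of the at most `q` goods with the largest strictly positive
per-good net utilities. -/
structure GreedySetting (w p : L → ℝ) (q : ℕ) (A : Finset L) : Prop where
  hp : ∀ l, 0 < p l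
  hw : ∀ l, 0 ≤ w l
  distinct : ∀ l l', l ≠ l' → w l - p l ≠ w l' - p l'
  pos : ∀ l ∈ A, 0 < w l - p l
  card : A.card = min q (Finset.univ.filter (fun l => 0 < w l - p l)).card
  best : ∀ l ∈ A, ∀ l' ∉ A, 0 < w l' - p l' → w l' - p l' < w l - p l

lemma greedy_key {w p : L → ℝ} {q : ℕ} {A : Finset L} (hG : GreedySetting w p q A)
    (C : Finset L) (hC : C.card ≤ q) :
    ∑ l ∈ C, (w l - p l) ≤ ∑ l ∈ A, (w l - p l) := by
  classical
  set f : L → ℝ := fun l => w l - p l with hf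
  set P : Finset L := Finset.univ.filter (fun l => 0 < f l) with hP
  have hAP : A ⊆ P := fun l hl =>
    Finset.mem_filter.mpr ⟨Finset.mem_univ l, hG.pos l hl⟩
  set C' : Finset L := C ∩ P with hC'
  have hC'P : C' ⊆ P := Finset.inter_subset_right
  -- step 1: drop nonpositive terms
  have h1 : ∑ l ∈ C, f l ≤ ∑ l ∈ C', f l := by
    have hsplit : ∑ l ∈ C ∩ P, f l + ∑ l ∈ C \ P, f l = ∑ l ∈ C, f l :=
      Finset.sum_inter_add_sum_sdiff C P f
    have hneg : ∑ l ∈ C \ P, f l ≤ 0 := by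
      apply Finset.sum_nonpos
      intro x hx
      rcases Finset.mem_sdiff.mp hx with ⟨-, hxP⟩
      by_contra h
      push_neg at h
      exact hxP (Finset.mem_filter.mpr ⟨Finset.mem_univ x, h⟩)
    linarith
  -- card bound : |C'| ≤ |A|
  have hcardA : A.card = min q P.card := hG.card
  have hcC' : C'.card ≤ A.card := by
    rw [hcardA]
    exact le_min (le_trans (Finset.card_le_card Finset.inter_subset_left) hC)
      (Finset.card_le_card hC'P)
  -- |C' \ A| ≤ |A \ C'|
  have hD : (C' \ A).card ≤ (A \ C').card := by
    have h1 := Finset.card_sdiff_add_card_inter C' A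
    have h2 := Finset.card_sdiff_add_card_inter A C'
    rw [Finset.inter_comm] at h2
    omega
  -- step 2: ∑_{C'\A} f ≤ ∑_{A\C'} f
  have h2 : ∑ l ∈ C' \ A, f l ≤ ∑ l ∈ A \ C', f l := by
    rcases Finset.eq_empty_or_nonempty (A \ C') with he | hne
    · have : C' \ A = ∅ := Finset.card_eq_zero.mp (by
        have := hD; rw [he] at this; simpa using this)
      simp [this, he]
    · obtain ⟨a0, ha0, hmin⟩ := Finset.exists_min_image (A \ C') f hne
      have ha0A : a0 ∈ A := (Finset.mem_sdiff.mp ha0).1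
      have ha0pos : 0 < f a0 := hG.pos a0 ha0A
      have hub : ∀ x ∈ C' \ A, f x ≤ f a0 := by
        intro x hx
        rcases Finset.mem_sdiff.mp hx with ⟨hxC', hxA⟩
        have hxpos : 0 < f x := (Finset.mem_filter.mp (hC'P hxC')).2
        exact le_of_lt (hG.best a0 ha0A x hxA hxpos)
      calc ∑ l ∈ C' \ A, f l ≤ (C' \ A).card • f a0 :=
            Finset.sum_le_card_nsmul _ _ _ hub
        _ ≤ (A \ C').card • f a0 := by
            rw [nsmul_eq_mul, nsmul_eq_mul]
            exact mul_le_mul_of_nonneg_right (by exact_mod_cast hD) ha0pos.le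
        _ ≤ ∑ l ∈ A \ C', f l := Finset.card_nsmul_le_sum _ _ _ hmin
  -- combine
  have hsC : ∑ l ∈ C' ∩ A, f l + ∑ l ∈ C' \ A, f l = ∑ l ∈ C', f l :=
    Finset.sum_inter_add_sum_sdiff C' A f
  have hsA : ∑ l ∈ A ∩ C', f l + ∑ l ∈ A \ C', f l = ∑ l ∈ A, f l :=
    Finset.sum_inter_add_sum_sdiff A C' f
  rw [Finset.inter_comm] at hsA
  have : ∑ l ∈ C', f l ≤ ∑ l ∈ A, f l := by linarith
  linarith

/-- No single improvement: no set `B` with `|A \ B| ≤ 1` or `|B \ A| ≤ 1`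
achieves strictly greater net utility than the greedy set `A`. -/
theorem greedy_no_single_improvement (w p : L → ℝ) (q : ℕ) (A : Finset L)
    (hG : GreedySetting w p q A) (U : Finset L → ℝ)
    (hU : ∀ A' : Finset L,
      IsGreatest {x | ∃ B ⊆ A', B.card ≤ q ∧ x = ∑ l ∈ B, w l} (U A')) :
    ∀ B : Finset L, ((A \ B).card ≤ 1 ∨ (B \ A).card ≤ 1) →
      U B - ∑ l ∈ B, p l ≤ U A - ∑ l ∈ A, p l := by
  intro B _
  have hAq : A.card ≤ q := by rw [hG.card]; exact min_le_left _ _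
  have hUA : ∑ l ∈ A, w l ≤ U A :=
    (hU A).2 ⟨A, Finset.Subset.refl A, hAq, rfl⟩
  obtain ⟨C, hCB, hCq, hCval⟩ := (hU B).1
  have hpC : ∑ l ∈ C, p l ≤ ∑ l ∈ B, p l :=
    Finset.sum_le_sum_of_subset_of_nonneg hCB (fun l _ _ => (hG.hp l).le)
  have hkey := greedy_key hG C hCq
  rw [Finset.sum_sub_distrib, Finset.sum_sub_distrib] at hkey
  rw [hCval]
  linarith
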